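/- Assume Γ is unitrivalent. For every positive integer k and every choice of boundary values j', there exists an external edge cocycle, i.e. a twisted 1-cocycle δ : Z(Γ) → (QCG_k(Γ; j') → ℂˣ) such that δ_j(λ) = exp(π√−1 · Σ_{f ∈ Ex(λ)} j f) for every λ ∈ Z(Γ) and j ∈ QCG_k(Γ; j') with λ·j = j. -/

import Mathlib

open scoped BigOperators

set_option linter.unusedSectionVars false
set_option linter.unreachableTactic false
set_option linter.unusedTactic false

variable {V E : Type*} [Fintype V] [Fintype E] [DecidableEq V] [DecidableEq E]

/-- The multiset of edge-ends at a vertex `v`: each edge `e` contributes one end for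
`s e = v` and one end for `t e = v`, so a loop at `v` contributes twice. -/
def endsAt (s t : E → V) (v : V) : Multiset E :=
  (Finset.univ.filter fun e => s e = v).val + (Finset.univ.filter fun e => t e = v).val

/-- The degree of a vertex (a loop counts twice). -/
def degree (s t : E → V) (v : V) : ℕ := Multiset.card (endsAt s t v)

/-- A graph is unitrivalent if every vertex has degree `1` or `3`. -/
def Unitrivalent (s t : E → V) : Prop := ∀ v, degree s t v = 1 ∨ degree s t v = 3

/-- The cycle space `Z(Γ)`: the `ZMod 2`-valued functions on edges whose total value over
the edge-ends at every vertex is `0`.  It plays the role of `H₁(Γ; ℤ/2)`. -/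
def cycleSpace (s t : E → V) : AddSubgroup (E → ZMod 2) where
  carrier := {x | ∀ v, ((endsAt s t v).map x).sum = 0}
  zero_mem' := by intro v; simp
  add_mem' := by
    intro a b ha hb v
    have h : ((endsAt s t v).map (a + b)).sum
        = ((endsAt s t v).map a).sum + ((endsAt s t v).map b).sum := by
      rw [show ((a + b : E → ZMod 2)) = fun e => a e + b e from rfl]
      rw [Multiset.sum_map_add]
    rw [h, ha v, hb v, add_zero]
  neg_mem' := by
    intro a ha v
    have h : (-a : E → ZMod 2) = a := funext fun e => by
      have h2 : ∀ x : ZMod 2, -x = x := by decide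
      exact h2 (a e)
    rw [h]; exact ha v

/-- A weight of level `k`: each edge gets a value in `{0, 1/2, 1, …, k/2}`. -/
def IsWeight (k : ℕ) (j : E → ℚ) : Prop := ∀ f, ∃ m : ℕ, m ≤ k ∧ j f = (m : ℚ) / 2

/-- The set `QCG_k(Γ; j')` of admissible weights of level `k` with boundary values `j'`:
weights agreeing with `j'` on edges with a univalent endpoint and satisfying the quantum
Clebsch–Gordan condition at every trivalent vertex (a loop contributes its weight twice;
the condition `2x ≤ a+b+c` for each of the three end-weights `x` is the triangle
inequality). -/
def QCG (s t : E → V) (k : ℕ) (j' : E → ℚ) : Set (E → ℚ) :=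
  {j | IsWeight k j ∧
    (∀ f, (degree s t (s f) = 1 ∨ degree s t (t f) = 1) → j f = j' f) ∧
    (∀ v, degree s t v = 3 →
      (∃ m : ℤ, ((endsAt s t v).map j).sum = (m : ℚ)) ∧
      (∀ x ∈ (endsAt s t v).map j, 2 * x ≤ ((endsAt s t v).map j).sum) ∧
      ((endsAt s t v).map j).sum ≤ (k : ℚ))}

/-- The action of a cycle `lam` on a weight `j`:
`(lam · j) f = k/2 - j f` if `lam f = 1` and `(lam · j) f = j f` otherwise. -/
def actW (k : ℕ) (lam : E → ZMod 2) (j : E → ℚ) : E → ℚ :=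
  fun f => if lam f = 1 then (k : ℚ) / 2 - j f else j f

theorem actW_zero (k : ℕ) (j : E → ℚ) : actW k (0 : E → ZMod 2) j = j := by
  funext f
  simp [actW]

theorem actW_add (k : ℕ) (l l' : E → ZMod 2) (j : E → ℚ) :
    actW k (l + l') j = actW k l (actW k l' j) := by
  funext f
  have h : ∀ x : ZMod 2, x = 0 ∨ x = 1 := by decide
  simp only [actW, Pi.add_apply]
  rcases h (l f) with h1 | h1 <;> rcases h (l' f) with h2 | h2 <;>
    simp [h1, h2] <;> ring

theorem add_self_zmod2 (l : E → ZMod 2) : l + l = 0 := by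
  funext f
  have h : ∀ x : ZMod 2, x + x = 0 := by decide
  exact h (l f)

/-- A vertex `v` lies on the cycle `lam` if some edge of `lam` has `v` as an endpoint. -/
def LiesOn (s t : E → V) (lam : E → ZMod 2) (v : V) : Prop :=
  ∃ e, lam e = 1 ∧ (s e = v ∨ t e = v)

/-- An edge `f` is `lam`-external if `lam` does not pass through `f` and exactly one of
its endpoints lies on `lam`. -/
def IsExternal (s t : E → V) (lam : E → ZMod 2) (f : E) : Prop :=
  lam f = 0 ∧ Xor' (LiesOn s t lam (s f)) (LiesOn s t lam (t f))

/-- `Ex(lam)`: the finite set of `lam`-external edges. -/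
noncomputable def Ex (s t : E → V) (lam : E → ZMod 2) : Finset E :=
  letI := Classical.decPred (IsExternal s t lam)
  Finset.univ.filter (IsExternal s t lam)

/-- A twisted 1-cocycle `δ : Z(Γ) → (QCG_k(Γ; j') → ℂˣ)` (encoded as a function on all of
`(E → ZMod 2) × (E → ℚ)`, constrained only on `Z(Γ) × QCG_k(Γ; j')`). -/
def IsCocycle (s t : E → V) (k : ℕ) (j' : E → ℚ)
    (δ : (E → ZMod 2) → (E → ℚ) → ℂˣ) : Prop :=
  ∀ lam ∈ cycleSpace s t, ∀ lam' ∈ cycleSpace s t, ∀ j ∈ QCG s t k j',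
    δ (lam + lam') j = δ lam (actW k lam' j) * δ lam' j

/-- A coboundary. -/
def IsCoboundary (s t : E → V) (k : ℕ) (j' : E → ℚ)
    (δ : (E → ZMod 2) → (E → ℚ) → ℂˣ) : Prop :=
  ∃ c : (E → ℚ) → ℂˣ, ∀ lam ∈ cycleSpace s t, ∀ j ∈ QCG s t k j',
    δ lam j = c (actW k lam j) * (c j)⁻¹

/-- The external edge condition. -/
def ExtCond (s t : E → V) (k : ℕ) (j' : E → ℚ)
    (δ : (E → ZMod 2) → (E → ℚ) → ℂˣ) : Prop :=
  ∀ lam ∈ cycleSpace s t, ∀ j ∈ QCG s t k j', actW k lam j = j →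
    (δ lam j : ℂ) =
      Complex.exp (Real.pi * Complex.I * ((∑ f ∈ Ex s t lam, j f : ℚ) : ℂ))

/-! ### Auxiliary development -/

namespace EEC

/-- `x` is an even integer (as a rational). -/
def QEven (x : ℚ) : Prop := ∃ m : ℤ, x = 2 * m

/-- `x` is an integer (as a rational). -/
def QInt (x : ℚ) : Prop := ∃ m : ℤ, x = m

theorem QEven.zero : QEven 0 := ⟨0, by norm_num⟩

theorem QEven.add {x y : ℚ} (hx : QEven x) (hy : QEven y) : QEven (x + y) := by
  obtain ⟨a, ha⟩ := hx; obtain ⟨b, hb⟩ := hy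
  exact ⟨a + b, by rw [ha, hb]; push_cast; ring⟩

theorem QEven.neg {x : ℚ} (hx : QEven x) : QEven (-x) := by
  obtain ⟨a, ha⟩ := hx; exact ⟨-a, by rw [ha]; push_cast; ring⟩

theorem QEven.sub {x y : ℚ} (hx : QEven x) (hy : QEven y) : QEven (x - y) := by
  rw [sub_eq_add_neg]; exact hx.add hy.neg

theorem QInt.zero : QInt 0 := ⟨0, by norm_num⟩

theorem QInt.one : QInt 1 := ⟨1, by norm_num⟩

theorem QInt.add {x y : ℚ} (hx : QInt x) (hy : QInt y) : QInt (x + y) := by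
  obtain ⟨a, ha⟩ := hx; obtain ⟨b, hb⟩ := hy
  exact ⟨a + b, by rw [ha, hb]; push_cast; ring⟩

theorem QInt.neg {x : ℚ} (hx : QInt x) : QInt (-x) := by
  obtain ⟨a, ha⟩ := hx; exact ⟨-a, by rw [ha]; push_cast; ring⟩

theorem QInt.sub {x y : ℚ} (hx : QInt x) (hy : QInt y) : QInt (x - y) := by
  rw [sub_eq_add_neg]; exact hx.add hy.neg

theorem QInt.mul {x y : ℚ} (hx : QInt x) (hy : QInt y) : QInt (x * y) := by
  obtain ⟨a, ha⟩ := hx; obtain ⟨b, hb⟩ := hy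
  exact ⟨a * b, by rw [ha, hb]; push_cast; ring⟩

theorem QEven.int_mul {x y : ℚ} (hx : QInt x) (hy : QEven y) : QEven (x * y) := by
  obtain ⟨a, ha⟩ := hx; obtain ⟨b, hb⟩ := hy
  exact ⟨a * b, by rw [ha, hb]; push_cast; ring⟩

theorem QEven.two_mul {x : ℚ} (hx : QInt x) : QEven (2 * x) := by
  obtain ⟨a, ha⟩ := hx; exact ⟨a, by rw [ha]⟩

theorem QEven.sum {α : Type*} {sfin : Finset α} {f : α → ℚ}
    (h : ∀ a ∈ sfin, QEven (f a)) : QEven (∑ a ∈ sfin, f a) := by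
  classical
  induction sfin using Finset.induction with
  | empty => simpa using QEven.zero
  | insert _ _ hnot ih =>
      rw [Finset.sum_insert hnot]
      exact (h _ (Finset.mem_insert_self _ _)).add
        (ih fun a ha => h a (Finset.mem_insert_of_mem ha))

theorem QInt.sum {α : Type*} {sfin : Finset α} {f : α → ℚ}
    (h : ∀ a ∈ sfin, QInt (f a)) : QInt (∑ a ∈ sfin, f a) := by
  classical
  induction sfin using Finset.induction with
  | empty => simpa using QInt.zero
  | insert _ _ hnot ih =>
      rw [Finset.sum_insert hnot]
      exact (h _ (Finset.mem_insert_self _ _)).add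
        (ih fun a ha => h a (Finset.mem_insert_of_mem ha))

/-- rational indicator of a proposition -/
noncomputable def ind (p : Prop) : ℚ := by classical exact if p then 1 else 0

theorem ind_pos {p : Prop} (h : p) : ind p = 1 := by simp [ind, h]

theorem ind_neg {p : Prop} (h : ¬ p) : ind p = 0 := by simp [ind, h]

theorem QInt.ind (p : Prop) : QInt (ind p) := by
  by_cases h : p
  · rw [ind_pos h]; exact QInt.one
  · rw [ind_neg h]; exact QInt.zero

theorem zmod2_cases (x : ZMod 2) : x = 0 ∨ x = 1 := by revert x; decide

theorem zmod2_not_one {x : ZMod 2} (h : ¬ x = 1) : x = 0 := by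
  rcases zmod2_cases x with h0 | h1
  · exact h0
  · exact absurd h1 h

theorem zmod2_add_one {a b : ZMod 2} (h : a + b = 1) :
    (a = 1 ∧ ¬ b = 1) ∨ (¬ a = 1 ∧ b = 1) := by
  revert a b; decide

end EEC

namespace EEC

variable {V E : Type*} [Fintype V] [Fintype E] [DecidableEq V] [DecidableEq E]

theorem mem_endsAt {s t : E → V} {v : V} {e : E} :
    e ∈ endsAt s t v ↔ (s e = v ∨ t e = v) := by
  simp [endsAt, Multiset.mem_add]

theorem mem_cycleSpace_iff {s t : E → V} {lam : E → ZMod 2} :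
    lam ∈ cycleSpace s t ↔ ∀ v, ((endsAt s t v).map lam).sum = 0 := Iff.rfl

/-- sum over the ends at `v` as two `Finset` sums -/
theorem endsAt_map_sum {M : Type*} [AddCommMonoid M] (s t : E → V) (v : V) (g : E → M) :
    ((endsAt s t v).map g).sum =
      (∑ e ∈ Finset.univ.filter fun e => s e = v, g e) +
      (∑ e ∈ Finset.univ.filter fun e => t e = v, g e) := by
  rw [endsAt, Multiset.map_add, Multiset.sum_add]
  rfl

/-- Double counting: a vertex-weighted sum of end-sums equals an edge sum. -/
theorem vertex_sum_eq (s t : E → V) (w : V → ℚ) (F : E → ℚ) :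
    ∑ v, w v * ((endsAt s t v).map F).sum = ∑ f, F f * (w (s f) + w (t f)) := by
  have h1 : ∀ v, w v * ((endsAt s t v).map F).sum
      = ∑ f, ((if s f = v then w v * F f else 0) + (if t f = v then w v * F f else 0)) := by
    intro v
    rw [endsAt_map_sum s t v F, mul_add, Finset.mul_sum, Finset.mul_sum,
      Finset.sum_filter, Finset.sum_filter, ← Finset.sum_add_distrib]
  rw [Finset.sum_congr rfl fun v _ => h1 v, Finset.sum_comm]
  apply Finset.sum_congr rfl
  intro f _
  rw [Finset.sum_add_distrib, Finset.sum_ite_eq Finset.univ (s f) (fun v => w v * F f),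
    Finset.sum_ite_eq Finset.univ (t f) (fun v => w v * F f),
    if_pos (Finset.mem_univ _), if_pos (Finset.mem_univ _)]
  ring

/-- sum over external edges, decomposed -/
theorem sum_Ex_eq (s t : E → V) (lam : E → ZMod 2) (d : E → ℚ) :
    (∑ f ∈ Ex s t lam, d f)
      = (∑ f, (if lam f = 1 then 0 else d f) *
          (ind (LiesOn s t lam (s f)) + ind (LiesOn s t lam (t f))))
        - 2 * ∑ f, (if lam f = 1 then 0 else d f) *
            ind (LiesOn s t lam (s f)) * ind (LiesOn s t lam (t f)) := by
  rw [Finset.mul_sum, ← Finset.sum_sub_distrib, Ex, Finset.sum_filter]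
  apply Finset.sum_congr rfl
  intro f _
  by_cases hl : lam f = 1
  · have hne : ¬ IsExternal s t lam f := by
      rintro ⟨h0, -⟩; rw [h0] at hl; exact absurd hl (by decide)
    rw [if_neg hne, if_pos hl]; ring
  · rw [if_neg hl]
    by_cases hs : LiesOn s t lam (s f) <;> by_cases ht : LiesOn s t lam (t f)
    · have hne : ¬ IsExternal s t lam f := by
        rintro ⟨-, hx⟩; rcases hx with ⟨-, h⟩ | ⟨-, h⟩ <;> [exact h ht; exact h hs]
      rw [if_neg hne, ind_pos hs, ind_pos ht]; ring
    · have he : IsExternal s t lam f := ⟨zmod2_not_one hl, Or.inl ⟨hs, ht⟩⟩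
      rw [if_pos he, ind_pos hs, ind_neg ht]; ring
    · have he : IsExternal s t lam f := ⟨zmod2_not_one hl, Or.inr ⟨ht, hs⟩⟩
      rw [if_pos he, ind_neg hs, ind_pos ht]; ring
    · have hne : ¬ IsExternal s t lam f := by
        rintro ⟨-, hx⟩; rcases hx with ⟨h, -⟩ | ⟨h, -⟩ <;> [exact hs h; exact ht h]
      rw [if_neg hne, ind_neg hs, ind_neg ht]; ring

/-- map-sum with an if equals map-sum over complement filter -/
theorem map_sum_ite_eq_filter (M : Multiset E) (p : E → Prop) [DecidablePred p] (g : E → ℚ) :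
    (M.map fun e => if p e then 0 else g e).sum = ((M.filter fun e => ¬ p e).map g).sum := by
  conv_lhs => rw [← Multiset.filter_add_not p M]
  rw [Multiset.map_add, Multiset.sum_add]
  have h1 : ((M.filter p).map fun e => if p e then 0 else g e).sum = 0 := by
    apply Multiset.sum_eq_zero
    intro x hx
    obtain ⟨e, he, rfl⟩ := Multiset.mem_map.mp hx
    rw [if_pos ((Multiset.mem_filter.mp he).2)]
  rw [h1, zero_add]
  congr 1
  apply Multiset.map_congr rfl
  intro e he
  rw [if_neg ((Multiset.mem_filter.mp he).2)]

theorem sum_map_ind (M : Multiset E) (p : E → Prop) [DecidablePred p] :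
    (M.map fun e => ind (p e)).sum = (Multiset.card (M.filter p) : ℚ) := by
  conv_lhs => rw [← Multiset.filter_add_not p M]
  rw [Multiset.map_add, Multiset.sum_add]
  have h1 : ((M.filter p).map fun e => ind (p e)) = Multiset.replicate (Multiset.card (M.filter p)) (1:ℚ) := by
    rw [Multiset.eq_replicate]
    constructor
    · rw [Multiset.card_map]
    · intro x hx
      obtain ⟨e, he, rfl⟩ := Multiset.mem_map.mp hx
      exact ind_pos ((Multiset.mem_filter.mp he).2)
  have h2 : (((M.filter fun e => ¬ p e)).map fun e => ind (p e)).sum = 0 := by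
    apply Multiset.sum_eq_zero
    intro x hx
    obtain ⟨e, he, rfl⟩ := Multiset.mem_map.mp hx
    exact ind_neg ((Multiset.mem_filter.mp he).2)
  rw [h1, h2, Multiset.sum_replicate, add_zero, nsmul_eq_mul, mul_one]

theorem card_filter_even_of_cycle (M : Multiset E) (nu : E → ZMod 2)
    (h : (M.map nu).sum = 0) : 2 ∣ Multiset.card (M.filter fun e => nu e = 1) := by
  classical
  have hsplit := Multiset.filter_add_not (fun e => nu e = 1) M
  have : ((M.filter fun e => nu e = 1).map nu).sum + ((M.filter fun e => ¬ nu e = 1).map nu).sum = 0 := by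
    rw [← Multiset.sum_add, ← Multiset.map_add, hsplit, h]
  have h2 : ((M.filter fun e => ¬ nu e = 1).map nu).sum = 0 := by
    apply Multiset.sum_eq_zero
    intro x hx
    obtain ⟨e, he, rfl⟩ := Multiset.mem_map.mp hx
    exact zmod2_not_one ((Multiset.mem_filter.mp he).2)
  have h1 : ((M.filter fun e => nu e = 1).map nu)
      = Multiset.replicate (Multiset.card (M.filter fun e => nu e = 1)) (1 : ZMod 2) := by
    rw [Multiset.eq_replicate]
    refine ⟨Multiset.card_map _ _, ?_⟩
    intro x hx
    obtain ⟨e, he, rfl⟩ := Multiset.mem_map.mp hx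
    exact (Multiset.mem_filter.mp he).2
  rw [h1, h2, add_zero, Multiset.sum_replicate, nsmul_eq_mul, mul_one] at this
  exact (ZMod.natCast_eq_zero_iff _ _).mp this

theorem filter_card_one {M : Multiset E} {p : E → Prop} [DecidablePred p]
    (h : Multiset.card (M.filter p) = 1) :
    ∃ e, e ∈ M ∧ p e ∧ M.filter p = {e} := by
  obtain ⟨e, he⟩ := Multiset.card_eq_one.mp h
  have hm : e ∈ M.filter p := by rw [he]; exact Multiset.mem_singleton_self e
  exact ⟨e, (Multiset.mem_filter.mp hm).1, (Multiset.mem_filter.mp hm).2, he⟩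

end EEC

namespace EEC

variable {V E : Type*} [Fintype V] [Fintype E] [DecidableEq V] [DecidableEq E]
variable {s t : E → V} {k : ℕ} {j jb : E → ℚ} {lam mu : E → ZMod 2}

noncomputable def FEx (s t : E → V) (lam : E → ZMod 2) (j : E → ℚ) : ℚ :=
  ∑ f ∈ Ex s t lam, j f

theorem liesOn_zero (v : V) : ¬ LiesOn s t (0 : E → ZMod 2) v := by
  rintro ⟨e, h1, -⟩
  exact absurd h1 (by simp)

theorem FEx_zero : FEx s t (0 : E → ZMod 2) j = 0 := by
  rw [FEx, sum_Ex_eq]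
  have h : ∀ v, ind (LiesOn s t (0 : E → ZMod 2) v) = 0 := fun v => ind_neg (liesOn_zero v)
  simp [h]

theorem jval_of_fix (hfix : actW k lam j = j) {f : E} (hf : lam f = 1) :
    j f = (k : ℚ) / 4 := by
  have h := congrFun hfix f
  simp only [actW, if_pos hf] at h
  linarith

theorem liesOn_of_end {v : V} {e : E} (he : e ∈ endsAt s t v) (h1 : lam e = 1) :
    LiesOn s t lam v := ⟨e, h1, mem_endsAt.mp he⟩

theorem exists_one_of_ne_zero (h : lam ≠ 0) : ∃ f, lam f = 1 := by
  by_contra hc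
  push_neg at hc
  exact h (funext fun f => zmod2_not_one (hc f))

theorem k_even_of_fix (hj : j ∈ QCG s t k jb) (hfix : actW k lam j = j) {f : E}
    (hf : lam f = 1) : ∃ k2 : ℕ, k = 2 * k2 := by
  obtain ⟨m, hm, hv⟩ := hj.1 f
  have h4 : j f = (k : ℚ) / 4 := jval_of_fix hfix hf
  have hq : (k : ℚ) = 2 * m := by rw [hv] at h4; linarith
  exact ⟨m, by exact_mod_cast hq⟩

theorem vertex_data (hut : Unitrivalent s t) (hcyc : lam ∈ cycleSpace s t)
    (hj : j ∈ QCG s t k jb) (hfix : actW k lam j = j) {k2 : ℕ} (hk : k = 2 * k2)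
    {v : V} (hv : LiesOn s t lam v) :
    Multiset.card (endsAt s t v) = 3 ∧
    Multiset.card ((endsAt s t v).filter fun e => lam e = 1) = 2 ∧
    ∃ (e₀ : E) (u : ℤ), e₀ ∈ endsAt s t v ∧
      ((endsAt s t v).filter fun e => ¬ lam e = 1) = {e₀} ∧ j e₀ = (u : ℚ) := by
  classical
  obtain ⟨e, he1, hev⟩ := hv
  have hem : e ∈ endsAt s t v := mem_endsAt.mpr hev
  have hcv := (mem_cycleSpace_iff.mp hcyc) v
  have hdeg : Multiset.card (endsAt s t v) = 3 := by
    rcases hut v with h1 | h3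
    · exfalso
      obtain ⟨e', he'⟩ := Multiset.card_eq_one.mp (h1 : Multiset.card (endsAt s t v) = 1)
      rw [he'] at hem hcv
      have hee : e = e' := Multiset.mem_singleton.mp hem
      rw [Multiset.map_singleton, Multiset.sum_singleton, ← hee, he1] at hcv
      exact absurd hcv (by decide)
    · exact h3
  obtain ⟨q, hq⟩ := card_filter_even_of_cycle (endsAt s t v) lam hcv
  have hle : Multiset.card ((endsAt s t v).filter fun e => lam e = 1) ≤ 3 := by
    calc Multiset.card ((endsAt s t v).filter fun e => lam e = 1)
        ≤ Multiset.card (endsAt s t v) := Multiset.card_le_card (Multiset.filter_le _ _)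
      _ = 3 := hdeg
  have hpos : 0 < Multiset.card ((endsAt s t v).filter fun e => lam e = 1) :=
    Multiset.card_pos_iff_exists_mem.mpr ⟨e, Multiset.mem_filter.mpr ⟨hem, he1⟩⟩
  have hc2 : Multiset.card ((endsAt s t v).filter fun e => lam e = 1) = 2 := by omega
  have hsum : Multiset.card ((endsAt s t v).filter fun e => lam e = 1)
      + Multiset.card ((endsAt s t v).filter fun e => ¬ lam e = 1) = 3 := by
    rw [← Multiset.card_add, Multiset.filter_add_not]
    exact hdeg
  have hc1 : Multiset.card ((endsAt s t v).filter fun e => ¬ lam e = 1) = 1 := by omega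
  obtain ⟨e₀, hm0, hp0, hset⟩ := filter_card_one hc1
  obtain ⟨n, hT⟩ := (hj.2.2 v (show degree s t v = 3 from hdeg)).1
  have hone : (((endsAt s t v).filter fun e => lam e = 1).map j).sum = (k : ℚ) / 2 := by
    have hrep : ((endsAt s t v).filter fun e => lam e = 1).map j
        = Multiset.replicate 2 ((k : ℚ) / 4) := by
      rw [Multiset.eq_replicate]
      refine ⟨by rw [Multiset.card_map, hc2], ?_⟩
      intro x hx
      obtain ⟨e', he', rfl⟩ := Multiset.mem_map.mp hx
      exact jval_of_fix hfix (Multiset.mem_filter.mp he').2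
    rw [hrep, Multiset.sum_replicate, nsmul_eq_mul]
    ring
  have hsplit : ((endsAt s t v).map j).sum
      = (((endsAt s t v).filter fun e => lam e = 1).map j).sum
        + (((endsAt s t v).filter fun e => ¬ lam e = 1).map j).sum := by
    rw [← Multiset.sum_add, ← Multiset.map_add, Multiset.filter_add_not]
  have hje : j e₀ = (n : ℚ) - (k : ℚ) / 2 := by
    rw [hsplit, hone, hset, Multiset.map_singleton, Multiset.sum_singleton] at hT
    linarith
  refine ⟨hdeg, hc2, e₀, n - k2, hm0, hset, ?_⟩
  rw [hje, hk]
  push_cast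
  ring

theorem lemB (hut : Unitrivalent s t) (hlam : lam ∈ cycleSpace s t)
    (hmu : mu ∈ cycleSpace s t) (hj : j ∈ QCG s t k jb) (hfix : actW k lam j = j) :
    QEven (FEx s t lam (actW k mu j) - FEx s t lam j) := by
  classical
  by_cases h0 : lam = 0
  · subst h0
    rw [FEx_zero, FEx_zero, sub_zero]
    exact QEven.zero
  obtain ⟨f1, hf1⟩ := exists_one_of_ne_zero h0
  obtain ⟨k2, hk⟩ := k_even_of_fix hj hfix hf1
  have hk2Q : (k : ℚ) / 2 = (k2 : ℚ) := by rw [hk]; push_cast; ring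
  set d : E → ℚ := fun f => actW k mu j f - j f with hd
  have hdef : ∀ f, d f = ind (mu f = 1) * ((k : ℚ) / 2 - 2 * j f) := by
    intro f
    by_cases h : mu f = 1
    · simp only [hd, actW, if_pos h, ind_pos h]; ring
    · simp only [hd, actW, if_neg h, ind_neg h]; ring
  have hsplit : FEx s t lam (actW k mu j) - FEx s t lam j = ∑ f ∈ Ex s t lam, d f := by
    rw [FEx, FEx, ← Finset.sum_sub_distrib]
  rw [hsplit, sum_Ex_eq]
  apply QEven.sub
  · have hvs := vertex_sum_eq s t (fun v => ind (LiesOn s t lam v))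
      (fun e => if lam e = 1 then 0 else d e)
    rw [← hvs]
    have key : ∀ v, QEven (ind (LiesOn s t lam v)
        * ((endsAt s t v).map fun e => if lam e = 1 then 0 else d e).sum
        - (k2 : ℚ) * ((endsAt s t v).map fun e => ind (lam e = 1 ∧ mu e = 1)).sum) := by
      intro v
      by_cases hv : LiesOn s t lam v
      · obtain ⟨hdeg, hc2, e₀, u, hm0, hset, hu⟩ := vertex_data hut hlam hj hfix hk hv
        have hinner : ((endsAt s t v).map fun e => if lam e = 1 then 0 else d e).sum = d e₀ := by
          rw [map_sum_ite_eq_filter, hset, Multiset.map_singleton, Multiset.sum_singleton]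
        have hcv := (mem_cycleSpace_iff.mp hmu) v
        obtain ⟨q, hq⟩ := card_filter_even_of_cycle (endsAt s t v) mu hcv
        have hsplit2 : Multiset.card ((endsAt s t v).filter fun e => lam e = 1 ∧ mu e = 1)
            + Multiset.card ((endsAt s t v).filter fun e => ¬ lam e = 1 ∧ mu e = 1)
            = Multiset.card ((endsAt s t v).filter fun e => mu e = 1) := by
          rw [← Multiset.filter_filter, ← Multiset.filter_filter, ← Multiset.card_add,
            Multiset.filter_add_not]
        have hc0 : (Multiset.card ((endsAt s t v).filter fun e => ¬ lam e = 1 ∧ mu e = 1) : ℚ)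
            = ind (mu e₀ = 1) := by
          have hswap : ((endsAt s t v).filter fun e => ¬ lam e = 1 ∧ mu e = 1)
              = ((endsAt s t v).filter fun e => mu e = 1 ∧ ¬ lam e = 1) :=
            Multiset.filter_congr fun x _ => and_comm
          rw [hswap, ← Multiset.filter_filter, hset, Multiset.filter_singleton]
          by_cases h : mu e₀ = 1
          · rw [if_pos h, ind_pos h]
            simp
          · rw [if_neg h, ind_neg h]
            simp
        set a := Multiset.card ((endsAt s t v).filter fun e => lam e = 1 ∧ mu e = 1) with ha
        have hindval : ind (mu e₀ = 1) = 2 * (q : ℚ) - a := by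
          rw [← hc0]
          have : a + Multiset.card ((endsAt s t v).filter fun e => ¬ lam e = 1 ∧ mu e = 1)
              = 2 * q := by rw [hsplit2, hq]
          have hcast : (a : ℚ)
              + (Multiset.card ((endsAt s t v).filter fun e => ¬ lam e = 1 ∧ mu e = 1) : ℚ)
              = 2 * q := by exact_mod_cast this
          linarith
        rw [ind_pos hv, one_mul, hinner, hdef e₀, sum_map_ind, ← ha, hindval, hu, hk2Q]
        exact ⟨q * k2 - 2 * q * u + a * u - a * k2, by push_cast; ring⟩
      · rw [ind_neg hv, zero_mul, zero_sub]
        apply QEven.neg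
        have hz : ((endsAt s t v).map fun e => ind (lam e = 1 ∧ mu e = 1)).sum = 0 := by
          apply Multiset.sum_eq_zero
          intro x hx
          obtain ⟨e, he, rfl⟩ := Multiset.mem_map.mp hx
          exact ind_neg fun hpe => hv (liesOn_of_end he hpe.1)
        rw [hz, mul_zero]
        exact QEven.zero
    have hassemble : ∑ v, ind (LiesOn s t lam v)
          * ((endsAt s t v).map fun e => if lam e = 1 then 0 else d e).sum
        = (∑ v, (ind (LiesOn s t lam v)
            * ((endsAt s t v).map fun e => if lam e = 1 then 0 else d e).sum
            - (k2 : ℚ) * ((endsAt s t v).map fun e => ind (lam e = 1 ∧ mu e = 1)).sum))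
          + (k2 : ℚ) * ∑ v, ((endsAt s t v).map fun e => ind (lam e = 1 ∧ mu e = 1)).sum := by
      rw [Finset.sum_sub_distrib, ← Finset.mul_sum]
      ring
    rw [hassemble]
    apply QEven.add (QEven.sum fun v _ => key v)
    have hglobal : ∑ v, ((endsAt s t v).map fun e => ind (lam e = 1 ∧ mu e = 1)).sum
        = ∑ f, ind (lam f = 1 ∧ mu f = 1) * (1 + 1) := by
      have hvs2 := vertex_sum_eq s t (fun _ => 1) (fun e => ind (lam e = 1 ∧ mu e = 1))
      simp only [one_mul] at hvs2
      exact hvs2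
    rw [hglobal]
    have hre : (k2 : ℚ) * ∑ f, ind (lam f = 1 ∧ mu f = 1) * (1 + 1)
        = 2 * ((k2 : ℚ) * ∑ f, ind (lam f = 1 ∧ mu f = 1)) := by
      rw [← Finset.sum_mul]
      ring
    rw [hre]
    exact QEven.two_mul (QInt.mul ⟨(k2 : ℤ), by push_cast; ring⟩
      (QInt.sum fun f _ => QInt.ind _))
  · apply QEven.two_mul
    apply QInt.sum
    intro f _
    by_cases hl : lam f = 1
    · rw [if_pos hl, zero_mul, zero_mul]
      exact QInt.zero
    · rw [if_neg hl, hdef f]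
      obtain ⟨mf, hmf, hjf⟩ := hj.1 f
      have h2j : QInt ((k : ℚ) / 2 - 2 * j f) :=
        ⟨(k2 : ℤ) - (mf : ℤ), by rw [hjf, hk2Q]; push_cast; ring⟩
      exact (((QInt.ind _).mul h2j).mul (QInt.ind _)).mul (QInt.ind _)

end EEC

namespace EEC

variable {V E : Type*} [Fintype V] [Fintype E] [DecidableEq V] [DecidableEq E]
variable {s t : E → V} {k : ℕ} {j jb : E → ℚ} {lam lam' : E → ZMod 2}

theorem QEven.comb {a b c d e f : ℚ} (h1 : QEven (a - c - e)) (hb : QInt b)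
    (hd : QInt d) (hf : QInt f) :
    QEven ((a - 2 * b) - (c - 2 * d) - (e - 2 * f)) := by
  obtain ⟨m1, hm1⟩ := h1
  obtain ⟨mb, hmb⟩ := hb
  obtain ⟨md, hmd⟩ := hd
  obtain ⟨mf, hmf⟩ := hf
  exact ⟨m1 - mb + md + mf, by push_cast; linarith⟩

/-- integrality of the "internal edge" sums -/
theorem Jint (hut : Unitrivalent s t) (hj : j ∈ QCG s t k jb) {nu : E → ZMod 2}
    (hc : nu ∈ cycleSpace s t) (hf : actW k nu j = j) {k2 : ℕ} (hk : k = 2 * k2) :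
    QInt (∑ f, (if nu f = 1 then 0 else j f)
      * ind (LiesOn s t nu (s f)) * ind (LiesOn s t nu (t f))) := by
  classical
  apply QInt.sum
  intro f _
  by_cases hl : nu f = 1
  · rw [if_pos hl, zero_mul, zero_mul]
    exact QInt.zero
  · by_cases hs1 : LiesOn s t nu (s f)
    · by_cases ht1 : LiesOn s t nu (t f)
      · obtain ⟨-, -, e₀, u, hm0, hset, hu⟩ := vertex_data hut hc hj hf hk hs1
        have hfm : f ∈ (endsAt s t (s f)).filter fun e => ¬ nu e = 1 :=
          Multiset.mem_filter.mpr ⟨mem_endsAt.mpr (Or.inl rfl), hl⟩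
        rw [hset, Multiset.mem_singleton] at hfm
        rw [if_neg hl, ind_pos hs1, ind_pos ht1, hfm, hu, mul_one, mul_one]
        exact ⟨u, rfl⟩
      · rw [ind_neg ht1, mul_zero]
        exact QInt.zero
    · rw [ind_neg hs1, mul_zero, zero_mul]
      exact QInt.zero

/-- The per-vertex analysis for Lemma A. -/
theorem keyA (hut : Unitrivalent s t)
    (hlam : lam ∈ cycleSpace s t) (hlam' : lam' ∈ cycleSpace s t)
    (hj : j ∈ QCG s t k jb) (hfix : actW k lam j = j) (hfix' : actW k lam' j = j)
    {k2 : ℕ} (hk : k = 2 * k2) (v : V) :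
    QEven ((ind (LiesOn s t (lam + lam') v)
        * ((endsAt s t v).map fun e => if (lam + lam') e = 1 then 0 else j e).sum
      - ind (LiesOn s t lam v)
        * ((endsAt s t v).map fun e => if lam e = 1 then 0 else j e).sum
      - ind (LiesOn s t lam' v)
        * ((endsAt s t v).map fun e => if lam' e = 1 then 0 else j e).sum)
      - (k : ℚ) / 4 * ind (¬ 2 ∣ Multiset.card
          ((endsAt s t v).filter fun e => lam' e = 1 ∧ lam e = 1)))
    ∧ (¬ 2 ∣ Multiset.card ((endsAt s t v).filter fun e => lam' e = 1 ∧ lam e = 1)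
        → QInt ((k : ℚ) / 4)) := by
  classical
  have hlam'' : lam + lam' ∈ cycleSpace s t := add_mem hlam hlam'
  have hfix'' : actW k (lam + lam') j = j := by rw [actW_add, hfix', hfix]
  by_cases hA : LiesOn s t lam v
  · by_cases hA' : LiesOn s t lam' v
    · -- main case: v on both cycles
      obtain ⟨hdeg, hcl2, e₀, u, hm0, hset, hu⟩ := vertex_data hut hlam hj hfix hk hA
      obtain ⟨-, hcl2', e₀', u', hm0', hset', hu'⟩ := vertex_data hut hlam' hj hfix' hk hA'
      have hnl0 : ¬ lam e₀ = 1 := by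
        have h := hset ▸ Multiset.mem_singleton_self e₀
        exact (Multiset.mem_filter.mp h).2
      have hnl0' : ¬ lam' e₀' = 1 := by
        have h := hset' ▸ Multiset.mem_singleton_self e₀'
        exact (Multiset.mem_filter.mp h).2
      have hcard1 : Multiset.card ((endsAt s t v).filter fun e => ¬ lam e = 1) = 1 := by
        rw [hset]; rfl
      have hcard1' : Multiset.card ((endsAt s t v).filter fun e => ¬ lam' e = 1) = 1 := by
        rw [hset']; rfl
      -- the four class cardinalities
      have hsplitA : Multiset.card ((endsAt s t v).filter fun e => lam' e = 1 ∧ lam e = 1)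
          + Multiset.card ((endsAt s t v).filter fun e => ¬ lam' e = 1 ∧ lam e = 1)
          = Multiset.card ((endsAt s t v).filter fun e => lam e = 1) := by
        rw [← Multiset.filter_filter, ← Multiset.filter_filter, ← Multiset.card_add,
          Multiset.filter_add_not]
      have hsplitB : Multiset.card ((endsAt s t v).filter fun e => lam e = 1 ∧ lam' e = 1)
          + Multiset.card ((endsAt s t v).filter fun e => ¬ lam e = 1 ∧ lam' e = 1)
          = Multiset.card ((endsAt s t v).filter fun e => lam' e = 1) := by
        rw [← Multiset.filter_filter, ← Multiset.filter_filter, ← Multiset.card_add,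
          Multiset.filter_add_not]
      have hsplitC : Multiset.card ((endsAt s t v).filter fun e => lam' e = 1 ∧ ¬ lam e = 1)
          + Multiset.card ((endsAt s t v).filter fun e => ¬ lam' e = 1 ∧ ¬ lam e = 1)
          = Multiset.card ((endsAt s t v).filter fun e => ¬ lam e = 1) := by
        rw [← Multiset.filter_filter, ← Multiset.filter_filter, ← Multiset.card_add,
          Multiset.filter_add_not]
      have hpatchB : Multiset.card ((endsAt s t v).filter fun e => lam e = 1 ∧ lam' e = 1)
          = Multiset.card ((endsAt s t v).filter fun e => lam' e = 1 ∧ lam e = 1) :=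
        congrArg Multiset.card (Multiset.filter_congr fun x _ => and_comm)
      have hpatchB2 : Multiset.card ((endsAt s t v).filter fun e => ¬ lam e = 1 ∧ lam' e = 1)
          = Multiset.card ((endsAt s t v).filter fun e => lam' e = 1 ∧ ¬ lam e = 1) :=
        congrArg Multiset.card (Multiset.filter_congr fun x _ => and_comm)
      have hsplitD : Multiset.card ((endsAt s t v).filter fun e => lam e = 1 ∧ ¬ lam' e = 1)
          + Multiset.card ((endsAt s t v).filter fun e => ¬ lam e = 1 ∧ ¬ lam' e = 1)
          = Multiset.card ((endsAt s t v).filter fun e => ¬ lam' e = 1) := by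
        rw [← Multiset.filter_filter, ← Multiset.filter_filter, ← Multiset.card_add,
          Multiset.filter_add_not]
      have hpatchD : Multiset.card ((endsAt s t v).filter fun e => lam e = 1 ∧ ¬ lam' e = 1)
          = Multiset.card ((endsAt s t v).filter fun e => ¬ lam' e = 1 ∧ lam e = 1) :=
        congrArg Multiset.card (Multiset.filter_congr fun x _ => and_comm)
      have hpatchD2 : Multiset.card ((endsAt s t v).filter fun e => ¬ lam e = 1 ∧ ¬ lam' e = 1)
          = Multiset.card ((endsAt s t v).filter fun e => ¬ lam' e = 1 ∧ ¬ lam e = 1) :=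
        congrArg Multiset.card (Multiset.filter_congr fun x _ => and_comm)
      have hinner : ((endsAt s t v).map fun e => if lam e = 1 then 0 else j e).sum = j e₀ := by
        rw [map_sum_ite_eq_filter, hset, Multiset.map_singleton, Multiset.sum_singleton]
      have hinner' : ((endsAt s t v).map fun e => if lam' e = 1 then 0 else j e).sum = j e₀' := by
        rw [map_sum_ite_eq_filter, hset', Multiset.map_singleton, Multiset.sum_singleton]
      have hcases : (Multiset.card ((endsAt s t v).filter fun e => lam' e = 1 ∧ lam e = 1) = 2
            ∧ Multiset.card ((endsAt s t v).filter fun e => ¬ lam' e = 1 ∧ lam e = 1) = 0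
            ∧ Multiset.card ((endsAt s t v).filter fun e => lam' e = 1 ∧ ¬ lam e = 1) = 0
            ∧ Multiset.card ((endsAt s t v).filter fun e => ¬ lam' e = 1 ∧ ¬ lam e = 1) = 1)
          ∨ (Multiset.card ((endsAt s t v).filter fun e => lam' e = 1 ∧ lam e = 1) = 1
            ∧ Multiset.card ((endsAt s t v).filter fun e => ¬ lam' e = 1 ∧ lam e = 1) = 1
            ∧ Multiset.card ((endsAt s t v).filter fun e => lam' e = 1 ∧ ¬ lam e = 1) = 1
            ∧ Multiset.card ((endsAt s t v).filter fun e => ¬ lam' e = 1 ∧ ¬ lam e = 1) = 0) := by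
        rw [hcl2] at hsplitA
        rw [hpatchB, hpatchB2, hcl2'] at hsplitB
        rw [hcard1] at hsplitC
        rw [hpatchD, hpatchD2, hcard1'] at hsplitD
        omega
      rcases hcases with ⟨hn2, hb, hc, hdd⟩ | ⟨hn1, hb, hc, hdd⟩
      · -- n = 2 : the two cycles share both ends at v
        have he00' : e₀ = e₀' := by
          have h1 : ¬ lam' e₀ = 1 := by
            intro h
            have hmem : e₀ ∈ (endsAt s t v).filter fun e => lam' e = 1 ∧ ¬ lam e = 1 :=
              Multiset.mem_filter.mpr ⟨hm0, h, hnl0⟩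
            rw [Multiset.card_eq_zero.mp hc] at hmem
            exact Multiset.notMem_zero _ hmem
          have hmem : e₀ ∈ (endsAt s t v).filter fun e => ¬ lam' e = 1 :=
            Multiset.mem_filter.mpr ⟨hm0, h1⟩
          rw [hset'] at hmem
          exact Multiset.mem_singleton.mp hmem
        have hA'' : ¬ LiesOn s t (lam + lam') v := by
          rintro ⟨e, he1, hev⟩
          have hem : e ∈ endsAt s t v := mem_endsAt.mpr hev
          rcases zmod2_add_one (show lam e + lam' e = 1 from he1) with ⟨h1, h2⟩ | ⟨h1, h2⟩
          · have hmem : e ∈ (endsAt s t v).filter fun e => ¬ lam' e = 1 ∧ lam e = 1 :=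
              Multiset.mem_filter.mpr ⟨hem, h2, h1⟩
            rw [Multiset.card_eq_zero.mp hb] at hmem
            exact Multiset.notMem_zero _ hmem
          · have hmem : e ∈ (endsAt s t v).filter fun e => lam' e = 1 ∧ ¬ lam e = 1 :=
              Multiset.mem_filter.mpr ⟨hem, h2, h1⟩
            rw [Multiset.card_eq_zero.mp hc] at hmem
            exact Multiset.notMem_zero _ hmem
        constructor
        · have hiz : ind (¬ 2 ∣ Multiset.card
              ((endsAt s t v).filter fun e => lam' e = 1 ∧ lam e = 1)) = 0 :=
            ind_neg (not_not_intro (by omega))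
          rw [hiz, mul_zero, ind_neg hA'', ind_pos hA, ind_pos hA', hinner, hinner',
            ← he00', hu]
          exact ⟨-u, by push_cast; ring⟩
        · intro hodd
          exact absurd (show 2 ∣ Multiset.card
            ((endsAt s t v).filter fun e => lam' e = 1 ∧ lam e = 1) by omega) hodd
      · -- n = 1 : the two cycles share exactly one end at v
        have hl'e₀ : lam' e₀ = 1 := by
          by_contra h
          have hmem : e₀ ∈ (endsAt s t v).filter fun e => ¬ lam' e = 1 ∧ ¬ lam e = 1 :=
            Multiset.mem_filter.mpr ⟨hm0, h, hnl0⟩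
          rw [Multiset.card_eq_zero.mp hdd] at hmem
          exact Multiset.notMem_zero _ hmem
        have hw4 : (k : ℚ) / 4 = (u : ℚ) := by
          rw [← hu, jval_of_fix hfix' hl'e₀]
        have hle₀' : lam e₀' = 1 := by
          by_contra h
          have hmem : e₀' ∈ (endsAt s t v).filter fun e => ¬ lam' e = 1 ∧ ¬ lam e = 1 :=
            Multiset.mem_filter.mpr ⟨hm0', hnl0', h⟩
          rw [Multiset.card_eq_zero.mp hdd] at hmem
          exact Multiset.notMem_zero _ hmem
        have hje₀' : j e₀' = (k : ℚ) / 4 := jval_of_fix hfix hle₀'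
        obtain ⟨eb, hebM, hebp, -⟩ := filter_card_one hb
        have hA'' : LiesOn s t (lam + lam') v :=
          ⟨eb, by rw [Pi.add_apply, hebp.2, zmod2_not_one hebp.1, add_zero],
            mem_endsAt.mp hebM⟩
        obtain ⟨-, -, e₂, u₂, hm₂, hset₂, hu₂⟩ := vertex_data hut hlam'' hj hfix'' hk hA''
        have hinner'' : ((endsAt s t v).map
            fun e => if (lam + lam') e = 1 then 0 else j e).sum = j e₂ := by
          rw [map_sum_ite_eq_filter, hset₂, Multiset.map_singleton, Multiset.sum_singleton]
        have hnp₂ : ¬ (lam + lam') e₂ = 1 := by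
          have h := hset₂ ▸ Multiset.mem_singleton_self e₂
          exact (Multiset.mem_filter.mp h).2
        have hle₂ : lam e₂ = 1 := by
          by_contra h
          have hmem : e₂ ∈ (endsAt s t v).filter fun e => ¬ lam e = 1 :=
            Multiset.mem_filter.mpr ⟨hm₂, h⟩
          rw [hset] at hmem
          have he2 : e₂ = e₀ := Multiset.mem_singleton.mp hmem
          apply hnp₂
          show lam e₂ + lam' e₂ = 1
          rw [zmod2_not_one h, zero_add, he2, hl'e₀]
        have hje₂ : j e₂ = (k : ℚ) / 4 := jval_of_fix hfix hle₂
        constructor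
        · have hiz : ind (¬ 2 ∣ Multiset.card
              ((endsAt s t v).filter fun e => lam' e = 1 ∧ lam e = 1)) = 1 :=
            ind_pos (by rw [hn1]; omega)
          rw [hiz, mul_one, ind_pos hA'', ind_pos hA, ind_pos hA', hinner, hinner',
            hinner'', hje₂, hje₀', hu, hw4]
          exact ⟨-u, by push_cast; ring⟩
        · intro _
          exact ⟨u, hw4⟩
    · -- v on lam only
      have hn0 : Multiset.card ((endsAt s t v).filter fun e => lam' e = 1 ∧ lam e = 1) = 0 := by
        rw [Multiset.card_eq_zero]
        rw [Multiset.filter_eq_nil]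
        intro e he hpe
        exact hA' (liesOn_of_end he hpe.1)
      have hA'' : LiesOn s t (lam + lam') v := by
        obtain ⟨e, he1, hev⟩ := hA
        have h2 : ¬ lam' e = 1 := fun h => hA' ⟨e, h, hev⟩
        exact ⟨e, by rw [Pi.add_apply, he1, zmod2_not_one h2, add_zero], hev⟩
      have hinner_eq : ((endsAt s t v).map fun e => if (lam + lam') e = 1 then 0 else j e).sum
          = ((endsAt s t v).map fun e => if lam e = 1 then 0 else j e).sum := by
        congr 1
        apply Multiset.map_congr rfl
        intro e he
        have h2 : ¬ lam' e = 1 := fun h => hA' (liesOn_of_end he h)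
        have heq : (lam + lam') e = lam e := by
          rw [Pi.add_apply, zmod2_not_one h2, add_zero]
        rw [heq]
      constructor
      · have hiz : ind (¬ 2 ∣ Multiset.card
            ((endsAt s t v).filter fun e => lam' e = 1 ∧ lam e = 1)) = 0 :=
          ind_neg (not_not_intro (hn0 ▸ dvd_zero 2))
        rw [hiz, mul_zero, ind_pos hA, ind_pos hA'', ind_neg hA', hinner_eq]
        exact ⟨0, by push_cast; ring⟩
      · intro hodd
        exact absurd (hn0 ▸ dvd_zero 2) hodd
  · by_cases hA' : LiesOn s t lam' v
    · -- v on lam' only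
      have hn0 : Multiset.card ((endsAt s t v).filter fun e => lam' e = 1 ∧ lam e = 1) = 0 := by
        rw [Multiset.card_eq_zero, Multiset.filter_eq_nil]
        intro e he hpe
        exact hA (liesOn_of_end he hpe.2)
      have hA'' : LiesOn s t (lam + lam') v := by
        obtain ⟨e, he1, hev⟩ := hA'
        have h2 : ¬ lam e = 1 := fun h => hA ⟨e, h, hev⟩
        exact ⟨e, by rw [Pi.add_apply, he1, zmod2_not_one h2, zero_add], hev⟩
      have hinner_eq : ((endsAt s t v).map fun e => if (lam + lam') e = 1 then 0 else j e).sum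
          = ((endsAt s t v).map fun e => if lam' e = 1 then 0 else j e).sum := by
        congr 1
        apply Multiset.map_congr rfl
        intro e he
        have h2 : ¬ lam e = 1 := fun h => hA (liesOn_of_end he h)
        have heq : (lam + lam') e = lam' e := by
          rw [Pi.add_apply, zmod2_not_one h2, zero_add]
        rw [heq]
      constructor
      · have hiz : ind (¬ 2 ∣ Multiset.card
            ((endsAt s t v).filter fun e => lam' e = 1 ∧ lam e = 1)) = 0 :=
          ind_neg (not_not_intro (hn0 ▸ dvd_zero 2))
        rw [hiz, mul_zero, ind_neg hA, ind_pos hA'', ind_pos hA', hinner_eq]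
        exact ⟨0, by push_cast; ring⟩
      · intro hodd
        exact absurd (hn0 ▸ dvd_zero 2) hodd
    · -- v on neither
      have hn0 : Multiset.card ((endsAt s t v).filter fun e => lam' e = 1 ∧ lam e = 1) = 0 := by
        rw [Multiset.card_eq_zero, Multiset.filter_eq_nil]
        intro e he hpe
        exact hA (liesOn_of_end he hpe.2)
      have hA'' : ¬ LiesOn s t (lam + lam') v := by
        rintro ⟨e, he1, hev⟩
        rcases zmod2_add_one (show lam e + lam' e = 1 from he1) with ⟨h1, -⟩ | ⟨-, h1⟩
        · exact hA ⟨e, h1, hev⟩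
        · exact hA' ⟨e, h1, hev⟩
      constructor
      · have hiz : ind (¬ 2 ∣ Multiset.card
            ((endsAt s t v).filter fun e => lam' e = 1 ∧ lam e = 1)) = 0 :=
          ind_neg (not_not_intro (hn0 ▸ dvd_zero 2))
        rw [hiz, mul_zero, ind_neg hA, ind_neg hA', ind_neg hA'']
        exact ⟨0, by push_cast; ring⟩
      · intro hodd
        exact absurd (hn0 ▸ dvd_zero 2) hodd

end EEC

namespace EEC

variable {V E : Type*} [Fintype V] [Fintype E] [DecidableEq V] [DecidableEq E]
variable {s t : E → V} {k : ℕ} {j jb : E → ℚ} {lam lam' : E → ZMod 2}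

theorem lemA (hut : Unitrivalent s t)
    (hlam : lam ∈ cycleSpace s t) (hlam' : lam' ∈ cycleSpace s t)
    (hj : j ∈ QCG s t k jb) (hfix : actW k lam j = j) (hfix' : actW k lam' j = j) :
    QEven (FEx s t (lam + lam') j - FEx s t lam j - FEx s t lam' j) := by
  classical
  by_cases h0 : lam = 0
  · subst h0
    rw [zero_add, FEx_zero, sub_zero, sub_self]
    exact QEven.zero
  by_cases h0' : lam' = 0
  · subst h0'
    rw [add_zero, FEx_zero, sub_self, zero_sub, neg_zero]
    exact QEven.zero
  obtain ⟨f1, hf1⟩ := exists_one_of_ne_zero h0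
  obtain ⟨k2, hk⟩ := k_even_of_fix hj hfix hf1
  have hlam'' : lam + lam' ∈ cycleSpace s t := add_mem hlam hlam'
  have hfix'' : actW k (lam + lam') j = j := by rw [actW_add, hfix', hfix]
  have expand : ∀ nu : E → ZMod 2, FEx s t nu j
      = (∑ v, ind (LiesOn s t nu v)
          * ((endsAt s t v).map fun e => if nu e = 1 then 0 else j e).sum)
        - 2 * ∑ f, (if nu f = 1 then 0 else j f)
            * ind (LiesOn s t nu (s f)) * ind (LiesOn s t nu (t f)) := by
    intro nu
    rw [FEx, sum_Ex_eq]
    congr 1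
    exact (vertex_sum_eq s t (fun v => ind (LiesOn s t nu v))
      (fun e => if nu e = 1 then 0 else j e)).symm
  rw [expand (lam + lam'), expand lam, expand lam']
  apply QEven.comb
  · -- the S-part
    have hcomb : (∑ v, ind (LiesOn s t (lam + lam') v)
          * ((endsAt s t v).map fun e => if (lam + lam') e = 1 then 0 else j e).sum)
        - (∑ v, ind (LiesOn s t lam v)
            * ((endsAt s t v).map fun e => if lam e = 1 then 0 else j e).sum)
        - (∑ v, ind (LiesOn s t lam' v)
            * ((endsAt s t v).map fun e => if lam' e = 1 then 0 else j e).sum)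
        = ∑ v, (ind (LiesOn s t (lam + lam') v)
            * ((endsAt s t v).map fun e => if (lam + lam') e = 1 then 0 else j e).sum
          - ind (LiesOn s t lam v)
            * ((endsAt s t v).map fun e => if lam e = 1 then 0 else j e).sum
          - ind (LiesOn s t lam' v)
            * ((endsAt s t v).map fun e => if lam' e = 1 then 0 else j e).sum) := by
      rw [← Finset.sum_sub_distrib, ← Finset.sum_sub_distrib]
    rw [hcomb]
    have hassem : ∑ v, (ind (LiesOn s t (lam + lam') v)
            * ((endsAt s t v).map fun e => if (lam + lam') e = 1 then 0 else j e).sum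
          - ind (LiesOn s t lam v)
            * ((endsAt s t v).map fun e => if lam e = 1 then 0 else j e).sum
          - ind (LiesOn s t lam' v)
            * ((endsAt s t v).map fun e => if lam' e = 1 then 0 else j e).sum)
        = (∑ v, ((ind (LiesOn s t (lam + lam') v)
            * ((endsAt s t v).map fun e => if (lam + lam') e = 1 then 0 else j e).sum
          - ind (LiesOn s t lam v)
            * ((endsAt s t v).map fun e => if lam e = 1 then 0 else j e).sum
          - ind (LiesOn s t lam' v)
            * ((endsAt s t v).map fun e => if lam' e = 1 then 0 else j e).sum)
          - (k : ℚ) / 4 * ind (¬ 2 ∣ Multiset.card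
              ((endsAt s t v).filter fun e => lam' e = 1 ∧ lam e = 1))))
          + (k : ℚ) / 4 * ∑ v, ind (¬ 2 ∣ Multiset.card
              ((endsAt s t v).filter fun e => lam' e = 1 ∧ lam e = 1)) := by
      simp only [Finset.sum_sub_distrib, Finset.mul_sum]
      ring
    rw [hassem]
    apply QEven.add (QEven.sum fun v _ => (keyA hut hlam hlam' hj hfix hfix' hk v).1)
    by_cases hodd : ∀ v : V, 2 ∣ Multiset.card
        ((endsAt s t v).filter fun e => lam' e = 1 ∧ lam e = 1)
    · have hz : ∀ v : V, ind (¬ 2 ∣ Multiset.card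
          ((endsAt s t v).filter fun e => lam' e = 1 ∧ lam e = 1)) = 0 :=
        fun v => ind_neg (not_not_intro (hodd v))
    
      have hzz : ∑ v, ind (¬ 2 ∣ Multiset.card
          ((endsAt s t v).filter fun e => lam' e = 1 ∧ lam e = 1)) = 0 := by
        rw [Finset.sum_congr rfl fun v _ => hz v, Finset.sum_const_zero]
      rw [hzz, mul_zero]
      exact QEven.zero
    · push_neg at hodd
      obtain ⟨v₀, hv₀⟩ := hodd
      apply QEven.int_mul ((keyA hut hlam hlam' hj hfix hfix' hk v₀).2 hv₀)
      have hper : ∀ v : V, QEven (ind (¬ 2 ∣ Multiset.card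
          ((endsAt s t v).filter fun e => lam' e = 1 ∧ lam e = 1))
          - (Multiset.card ((endsAt s t v).filter fun e => lam' e = 1 ∧ lam e = 1) : ℚ)) := by
        intro v
        by_cases h2 : 2 ∣ Multiset.card ((endsAt s t v).filter fun e => lam' e = 1 ∧ lam e = 1)
        · obtain ⟨c2, hc2⟩ := h2
          rw [ind_neg (not_not_intro ⟨c2, hc2⟩), hc2]
          exact ⟨-(c2 : ℤ), by push_cast; ring⟩
        · rcases Nat.even_or_odd (Multiset.card
              ((endsAt s t v).filter fun e => lam' e = 1 ∧ lam e = 1)) with he | ho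
          · exact absurd (by obtain ⟨r, hr⟩ := he; exact ⟨r, by omega⟩) h2
          · obtain ⟨c2, hc2⟩ := ho
            rw [ind_pos h2, hc2]
            exact ⟨-(c2 : ℤ), by push_cast; ring⟩
      have hsplitodd : (∑ v, ind (¬ 2 ∣ Multiset.card
            ((endsAt s t v).filter fun e => lam' e = 1 ∧ lam e = 1)))
          = (∑ v, (ind (¬ 2 ∣ Multiset.card
              ((endsAt s t v).filter fun e => lam' e = 1 ∧ lam e = 1))
            - (Multiset.card ((endsAt s t v).filter fun e => lam' e = 1 ∧ lam e = 1) : ℚ)))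
            + ∑ v, (Multiset.card ((endsAt s t v).filter fun e => lam' e = 1 ∧ lam e = 1) : ℚ) := by
        rw [Finset.sum_sub_distrib]
        ring
      rw [hsplitodd]
      apply QEven.add (QEven.sum fun v _ => hper v)
      have hcount : ∑ v, (Multiset.card
            ((endsAt s t v).filter fun e => lam' e = 1 ∧ lam e = 1) : ℚ)
          = ∑ f, ind (lam' f = 1 ∧ lam f = 1) * (1 + 1) := by
        have h1 := vertex_sum_eq s t (fun _ => 1) (fun e => ind (lam' e = 1 ∧ lam e = 1))
        simp only [one_mul] at h1
        rw [← h1]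
        exact Finset.sum_congr rfl fun v _ => (sum_map_ind _ _).symm
      rw [hcount]
      have hre : ∑ f, ind (lam' f = 1 ∧ lam f = 1) * (1 + 1)
          = 2 * ∑ f, ind (lam' f = 1 ∧ lam f = 1) := by
        rw [← Finset.sum_mul]
        ring
      rw [hre]
      exact QEven.two_mul (QInt.sum fun f _ => QInt.ind _)
  · exact Jint hut hj hlam'' hfix'' hk
  · exact Jint hut hj hlam hfix hk
  · exact Jint hut hj hlam' hfix' hk

theorem FEx_int (hut : Unitrivalent s t) (hlam : lam ∈ cycleSpace s t)
    (hj : j ∈ QCG s t k jb) (hfix : actW k lam j = j) :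
    ∃ n : ℤ, FEx s t lam j = (n : ℚ) := by
  obtain ⟨m, hm⟩ := lemA hut hlam hlam hj hfix hfix
  rw [add_self_zmod2, FEx_zero] at hm
  exact ⟨-m, by push_cast; linarith⟩

end EEC

namespace EEC

variable {V E : Type*} [Fintype V] [Fintype E] [DecidableEq V] [DecidableEq E]

/-- the orbit equivalence relation on weights -/
def RR (s t : E → V) (k : ℕ) : Setoid (E → ℚ) where
  r a b := ∃ mu ∈ cycleSpace s t, actW k mu a = b
  iseqv := by
    constructor
    · intro a
      exact ⟨0, zero_mem _, actW_zero k a⟩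
    · rintro a b ⟨mu, hmu, rfl⟩
      refine ⟨mu, hmu, ?_⟩
      rw [← actW_add, add_self_zmod2, actW_zero]
    · rintro a b c ⟨mu, hmu, rfl⟩ ⟨nu, hnu, rfl⟩
      refine ⟨nu + mu, add_mem hnu hmu, ?_⟩
      rw [actW_add]

noncomputable def repQ (s t : E → V) (k : ℕ) (jb : E → ℚ) (q : Quotient (RR s t k)) :
    E → ℚ :=
  letI := Classical.propDecidable (∃ c, c ∈ QCG s t k jb ∧ (RR s t k).r q.out c)
  if h : ∃ c, c ∈ QCG s t k jb ∧ (RR s t k).r q.out c then h.choose else q.out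

/-- an orbit representative, chosen inside `QCG` whenever possible -/
noncomputable def rep (s t : E → V) (k : ℕ) (jb : E → ℚ) (j : E → ℚ) : E → ℚ :=
  repQ s t k jb (Quotient.mk (RR s t k) j)

theorem rep_eq_of_rel {s t : E → V} {k : ℕ} {jb : E → ℚ} {j₁ j₂ : E → ℚ}
    (h : (RR s t k).r j₁ j₂) : rep s t k jb j₁ = rep s t k jb j₂ := by
  unfold rep
  rw [Quotient.sound h]

theorem rep_spec {s t : E → V} {k : ℕ} {jb : E → ℚ} {j : E → ℚ}
    (hj : j ∈ QCG s t k jb) :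
    rep s t k jb j ∈ QCG s t k jb ∧ (RR s t k).r (rep s t k jb j) j := by
  have hout : (RR s t k).r (Quotient.mk (RR s t k) j).out j :=
    Quotient.exact (Quotient.out_eq _)
  have hex : ∃ c, c ∈ QCG s t k jb ∧ (RR s t k).r (Quotient.mk (RR s t k) j).out c :=
    ⟨j, hj, hout⟩
  have hval : rep s t k jb j = hex.choose := by
    unfold rep repQ
    rw [dif_pos hex]
  rw [hval]
  exact ⟨hex.choose_spec.1,
    (RR s t k).iseqv.trans ((RR s t k).iseqv.symm hex.choose_spec.2) hout⟩

/-- the stabilizer of a weight inside the cycle space, as a `ZMod 2`-submodule -/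
def Stab (s t : E → V) (k : ℕ) (c : E → ℚ) : Submodule (ZMod 2) (E → ZMod 2) where
  carrier := {lam | lam ∈ cycleSpace s t ∧ actW k lam c = c}
  add_mem' := by
    rintro x y ⟨hx1, hx2⟩ ⟨hy1, hy2⟩
    exact ⟨add_mem hx1 hy1, by rw [actW_add, hy2, hx2]⟩
  zero_mem' := ⟨zero_mem _, actW_zero k c⟩
  smul_mem' := by
    intro r x hx
    rcases zmod2_cases r with h | h <;> subst h
    · rw [zero_smul]
      exact ⟨zero_mem _, actW_zero k c⟩
    · rw [one_smul]
      exact hx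

theorem exists_psi {s t : E → V} (hut : Unitrivalent s t) (k : ℕ) (jb : E → ℚ)
    (c : E → ℚ) :
    ∃ ψ : (E → ZMod 2) →ₗ[ZMod 2] ZMod 2,
      c ∈ QCG s t k jb → ∀ lam, lam ∈ cycleSpace s t → actW k lam c = c →
        ∀ n : ℤ, FEx s t lam c = (n : ℚ) → ψ lam = ((n : ℤ) : ZMod 2) := by
  classical
  haveI : Fact (Nat.Prime 2) := ⟨Nat.prime_two⟩
  by_cases hc : c ∈ QCG s t k jb
  · have hint : ∀ x : Stab s t k c, ∃ n : ℤ, FEx s t (x : E → ZMod 2) c = (n : ℚ) :=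
      fun x => FEx_int hut x.2.1 hc x.2.2
    choose nf hnf using hint
    have hnf0 : nf 0 = 0 := by
      have h := hnf 0
      rw [show ((0 : Stab s t k c) : E → ZMod 2) = 0 from rfl, FEx_zero] at h
      exact_mod_cast h.symm
    have gadd : ∀ x y : Stab s t k c,
        ((nf (x + y) : ℤ) : ZMod 2) = ((nf x : ℤ) : ZMod 2) + ((nf y : ℤ) : ZMod 2) := by
      intro x y
      obtain ⟨m, hm⟩ := lemA hut x.2.1 y.2.1 hc x.2.2 y.2.2
      have h1 := hnf (x + y)
      rw [Submodule.coe_add] at h1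
      rw [h1, hnf x, hnf y] at hm
      have hz : nf (x + y) = nf x + nf y + 2 * m := by
        have : (nf (x + y) : ℚ) = ((nf x + nf y + 2 * m : ℤ) : ℚ) := by push_cast; linarith
        exact_mod_cast this
      rw [hz]
      have h2 : ((2 * m : ℤ) : ZMod 2) = 0 :=
        (ZMod.intCast_zmod_eq_zero_iff_dvd _ 2).mpr ⟨m, rfl⟩
      calc ((nf x + nf y + 2 * m : ℤ) : ZMod 2)
          = ((nf x : ℤ) : ZMod 2) + ((nf y : ℤ) : ZMod 2) + ((2 * m : ℤ) : ZMod 2) := by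
            push_cast; ring
        _ = ((nf x : ℤ) : ZMod 2) + ((nf y : ℤ) : ZMod 2) := by rw [h2, add_zero]
    let g : Stab s t k c →ₗ[ZMod 2] ZMod 2 :=
      { toFun := fun x => ((nf x : ℤ) : ZMod 2)
        map_add' := gadd
        map_smul' := by
          intro r x
          rcases zmod2_cases r with h | h <;> subst h
          · simp [zero_smul, hnf0]
          · simp }
    obtain ⟨q, hq⟩ := Submodule.exists_isCompl (Stab s t k c)
    refine ⟨g ∘ₗ Submodule.linearProjOfIsCompl _ q hq, ?_⟩
    intro _ lam h1 h2 n hn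
    have hx : lam ∈ Stab s t k c := ⟨h1, h2⟩
    have hproj : Submodule.linearProjOfIsCompl _ q hq lam = ⟨lam, hx⟩ :=
      Submodule.linearProjOfIsCompl_apply_left hq ⟨lam, hx⟩
    have happ : (g ∘ₗ Submodule.linearProjOfIsCompl _ q hq) lam = g ⟨lam, hx⟩ := by
      rw [LinearMap.comp_apply, hproj]
    have hnn : n = nf ⟨lam, hx⟩ := by
      have h3 : (n : ℚ) = (nf ⟨lam, hx⟩ : ℚ) := by
        rw [← hn]
        exact hnf ⟨lam, hx⟩
      exact_mod_cast h3
    rw [happ]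
    show ((nf ⟨lam, hx⟩ : ℤ) : ZMod 2) = ((n : ℤ) : ZMod 2)
    rw [hnn]
  · exact ⟨0, fun h => absurd h hc⟩

noncomputable def eps (x : ZMod 2) : ℂˣ := if x = 0 then 1 else -1

theorem eps_add (a b : ZMod 2) : eps (a + b) = eps a * eps b := by
  have hm : (-1 : ℂˣ) * (-1) = 1 := Units.ext (by simp)
  rcases zmod2_cases a with ha | ha <;> rcases zmod2_cases b with hb | hb <;>
    subst ha <;> subst hb <;>
    simp [eps, hm, show (1 : ZMod 2) + 1 = 0 by decide, show ¬ (1 : ZMod 2) = 0 by decide]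

theorem eps_val_of_int (n : ℤ) : ((eps ((n : ℤ) : ZMod 2)) : ℂ) = (-1 : ℂ) ^ n := by
  rcases Int.even_or_odd n with he | ho
  · obtain ⟨c, hc⟩ := he
    have h0 : ((n : ℤ) : ZMod 2) = 0 :=
      (ZMod.intCast_zmod_eq_zero_iff_dvd n 2).mpr ⟨c, by omega⟩
    simp only [eps, if_pos h0, Units.val_one]
    exact (Even.neg_one_zpow ⟨c, hc⟩).symm
  · obtain ⟨c, hc⟩ := ho
    have h0 : ¬ ((n : ℤ) : ZMod 2) = 0 := by
      rw [ZMod.intCast_zmod_eq_zero_iff_dvd]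
      rintro ⟨r, hr⟩
      omega
    simp only [eps, if_neg h0, Units.val_neg, Units.val_one]
    exact (Odd.neg_one_zpow ⟨c, hc⟩).symm

theorem exp_pi_I_int (n : ℤ) :
    Complex.exp (Real.pi * Complex.I * (n : ℂ)) = (-1 : ℂ) ^ n := by
  rw [mul_comm, Complex.exp_int_mul, Complex.exp_pi_mul_I]

end EEC

/-- for every positive integer `k` and every choice of boundary values
`j'`, there exists an external edge cocycle, i.e. a twisted 1-cocycle
`δ : Z(Γ) → (QCG_k(Γ; j') → ℂˣ)` with
`δ_j(lam) = exp(π√-1 · Σ_{f ∈ Ex(lam)} j f)` whenever `lam · j = j`. -/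
theorem exists_external_edge_cocycle
    (s t : E → V) (hut : Unitrivalent s t) :
    ∀ k : ℕ, 0 < k → ∀ j' : E → ℚ,
      ∃ δ : (E → ZMod 2) → (E → ℚ) → ℂˣ,
        IsCocycle s t k j' δ ∧ ExtCond s t k j' δ := by
  intro k _ j'
  classical
  refine ⟨fun lam j => EEC.eps ((EEC.exists_psi hut k j' (EEC.rep s t k j' j)).choose lam),
    ?_, ?_⟩
  · intro lam hlam lam' hlam' j hj
    have hrel : (EEC.RR s t k) j (actW k lam' j) := ⟨lam', hlam', rfl⟩
    have hrepeq : EEC.rep s t k j' (actW k lam' j) = EEC.rep s t k j' j :=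
      EEC.rep_eq_of_rel ((EEC.RR s t k).iseqv.symm hrel)
    show EEC.eps ((EEC.exists_psi hut k j' (EEC.rep s t k j' j)).choose (lam + lam'))
        = EEC.eps ((EEC.exists_psi hut k j' (EEC.rep s t k j' (actW k lam' j))).choose lam)
          * EEC.eps ((EEC.exists_psi hut k j' (EEC.rep s t k j' j)).choose lam')
    rw [hrepeq, map_add, EEC.eps_add]
  · intro lam hlam j hj hfix
    obtain ⟨hcQ, hrel⟩ := EEC.rep_spec (jb := j') hj
    obtain ⟨mu, hmu, hmuc⟩ := (EEC.RR s t k).iseqv.symm hrel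
    have hstab : actW k lam (EEC.rep s t k j' j) = EEC.rep s t k j' j := by
      rw [← hmuc, ← actW_add, add_comm, actW_add, hfix]
    obtain ⟨n, hn⟩ := EEC.FEx_int hut hlam hcQ hstab
    have hpsi :=
      (EEC.exists_psi hut k j' (EEC.rep s t k j' j)).choose_spec hcQ lam hlam hstab n hn
    obtain ⟨m, hm⟩ := EEC.lemB hut hlam hmu hj hfix
    rw [hmuc] at hm
    have h1 : EEC.FEx s t lam j = ((n - 2 * m : ℤ) : ℚ) := by push_cast; linarith
    have hsum : ((∑ f ∈ Ex s t lam, j f : ℚ) : ℂ) = ((n - 2 * m : ℤ) : ℂ) := by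
      have h2 : (∑ f ∈ Ex s t lam, j f) = ((n - 2 * m : ℤ) : ℚ) := h1
      rw [h2]
      push_cast
      ring
    show (EEC.eps ((EEC.exists_psi hut k j' (EEC.rep s t k j' j)).choose lam) : ℂ)
        = Complex.exp (Real.pi * Complex.I * ((∑ f ∈ Ex s t lam, j f : ℚ) : ℂ))
    rw [hpsi, hsum, EEC.exp_pi_I_int, EEC.eps_val_of_int]
    rw [zpow_sub₀ (by norm_num : (-1 : ℂ) ≠ 0)]
    have h2 : (-1 : ℂ) ^ (2 * m) = 1 := by
      rw [zpow_mul]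
      norm_num
    rw [h2, div_one]
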